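/- Let c ∈ ℕ, let G be a graph, let λ be a c-edge-labeling of G, and let (A, B) be a separation of G of order two such that the two vertices of A ∩ B are adjacent in G. If the restriction of λ to G[A] is a c-gel of G[A] and the restriction of λ to G[B] is a c-gel of G[B], then λ is a c-gel of G. Moreover, if both G[A] and G[B] are good, then G is good. -/

import Mathlib

/-- A walk is *increasing* with respect to an edge-labeling if the sequence of labels of its
edges, traversed from the first endpoint to the last, is non-decreasing. -/
def IsIncreasing {V : Type*} (G : SimpleGraph V) (lab : Sym2 V → ℝ) {x y : V}
    (p : G.Walk x y) : Prop :=
  (p.edges.map lab).Chain' (· ≤ ·)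

/-- An edge-labeling is *good* if for every ordered pair `(x, y)` of vertices there do not
exist two distinct increasing paths from `x` to `y`. -/
def IsGoodLabeling {V : Type*} (G : SimpleGraph V) (lab : Sym2 V → ℝ) : Prop :=
  ∀ (x y : V) (p q : G.Walk x y), p.IsPath → q.IsPath →
    IsIncreasing G lab p → IsIncreasing G lab q → p = q

/-- A `c`-gel: a good edge-labeling taking at most `c` distinct values on the edges. -/
def IsCGel {V : Type*} (G : SimpleGraph V) (c : ℕ) (lab : Sym2 V → ℝ) : Prop :=
  IsGoodLabeling G lab ∧ (lab '' G.edgeSet).ncard ≤ c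

/-- The restriction of an edge-labeling of `G` to the induced subgraph on `S`. -/
def restrictLab {V : Type*} (lab : Sym2 V → ℝ) (S : Set V) : Sym2 ↥S → ℝ :=
  fun e => lab (Sym2.map (Subtype.val : ↥S → V) e)

open SimpleGraph

section Lift
variable {V : Type*} {G : SimpleGraph V} {lab : Sym2 V → ℝ}

def inclHom (S : Set V) : G.induce S →g G where
  toFun := Subtype.val
  map_rel' := fun h => h

def liftW (S : Set V) : ∀ {x y : V} (p : G.Walk x y) (h : ∀ v ∈ p.support, v ∈ S),
    (G.induce S).Walk ⟨x, h x p.start_mem_support⟩ ⟨y, h y p.end_mem_support⟩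
  | _, _, Walk.nil, _ => Walk.nil
  | _, _, Walk.cons ha p, h =>
    Walk.cons (by exact ha) (liftW S p fun v hv => h v (List.mem_cons_of_mem _ hv))

lemma liftW_spec (S : Set V) : ∀ {x y : V} (p : G.Walk x y) (h : ∀ v ∈ p.support, v ∈ S),
    (liftW S p h).map (inclHom S) = p
  | _, _, Walk.nil, _ => rfl
  | _, _, Walk.cons ha p, h => by
    exact congrArg (Walk.cons ha) (liftW_spec S p _)

lemma liftW_isPath {S : Set V} {x y : V} {p : G.Walk x y} (h : ∀ v ∈ p.support, v ∈ S)
    (hp : p.IsPath) : (liftW S p h).IsPath := by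
  apply Walk.IsPath.of_map (f := inclHom S)
  rw [liftW_spec]; exact hp

lemma liftW_edges {S : Set V} {x y : V} {p : G.Walk x y} (h : ∀ v ∈ p.support, v ∈ S) :
    (liftW S p h).edges.map (restrictLab lab S) = p.edges.map lab := by
  conv_rhs => rw [← liftW_spec S p h]
  erw [Walk.edges_map]
  rw [List.map_map]
  rfl

lemma liftW_incr {S : Set V} {x y : V} {p : G.Walk x y} (h : ∀ v ∈ p.support, v ∈ S)
    (hp : IsIncreasing G lab p) :
    IsIncreasing (G.induce S) (restrictLab lab S) (liftW S p h) := by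
  unfold IsIncreasing at *
  rw [liftW_edges]; exact hp

lemma unique_in {S : Set V} (hS : IsGoodLabeling (G.induce S) (restrictLab lab S))
    {x y : V} {p q : G.Walk x y} (hp : p.IsPath) (hq : q.IsPath)
    (ip : IsIncreasing G lab p) (iq : IsIncreasing G lab q)
    (hps : ∀ v ∈ p.support, v ∈ S) (hqs : ∀ v ∈ q.support, v ∈ S) : p = q := by
  have h1 : liftW S p hps = liftW S q hqs :=
    hS _ _ _ _ (liftW_isPath hps hp) (liftW_isPath hqs hq) (liftW_incr hps ip)
      (liftW_incr hqs iq)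
  rw [← liftW_spec S p hps, ← liftW_spec S q hqs, h1]

lemma incr_edge (h : G.Adj x y) : IsIncreasing G lab (Walk.cons h Walk.nil) := by
  simp [IsIncreasing]
  exact List.isChain_singleton _

lemma path_edge (h : G.Adj x y) : (Walk.cons h Walk.nil).IsPath := by
  simp [Walk.cons_isPath_iff, h.ne]

lemma noCross {S : Set V} (hS : IsGoodLabeling (G.induce S) (restrictLab lab S))
    {u w : V} (hu : u ∈ S) (hw : w ∈ S) (huw : G.Adj u w) {p : G.Walk u w}
    (hp : p.IsPath) (ip : IsIncreasing G lab p) (hps : ∀ v ∈ p.support, v ∈ S) :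
    p.length = 1 := by
  have : p = Walk.cons huw Walk.nil := by
    refine unique_in hS hp (path_edge huw) ip (incr_edge huw) hps ?_
    intro v hv
    simp only [Walk.support_cons, Walk.support_nil, List.mem_cons, List.mem_singleton] at hv
    rcases hv with rfl | hv
    · exact hu
    · simp at hv; subst hv; exact hw
  rw [this]; rfl

end Lift

section Incr
variable {V : Type*} {G : SimpleGraph V} {lab : Sym2 V → ℝ} {x y z : V}

lemma IsIncreasing.of_append_left {p : G.Walk x y} {q : G.Walk y z}
    (h : IsIncreasing G lab (p.append q)) : IsIncreasing G lab p := by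
  unfold IsIncreasing at *
  rw [Walk.edges_append, List.map_append] at h
  exact h.prefix (List.prefix_append _ _)

lemma IsIncreasing.of_append_right {p : G.Walk x y} {q : G.Walk y z}
    (h : IsIncreasing G lab (p.append q)) : IsIncreasing G lab q := by
  unfold IsIncreasing at *
  rw [Walk.edges_append, List.map_append] at h
  exact h.suffix (List.suffix_append _ _)

lemma IsIncreasing.of_cons {h : G.Adj x y} {p : G.Walk y z}
    (hi : IsIncreasing G lab (Walk.cons h p)) : IsIncreasing G lab p := by
  unfold IsIncreasing at *
  rw [Walk.edges_cons, List.map_cons] at hi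
  exact hi.tail

lemma IsIncreasing.link {p : G.Walk x y} {q : G.Walk y z}
    (h : IsIncreasing G lab (p.append q)) :
    ∀ α ∈ (p.edges.map lab).getLast?, ∀ β ∈ (q.edges.map lab).head?, α ≤ β := by
  unfold IsIncreasing at h
  rw [Walk.edges_append, List.map_append] at h
  exact (List.isChain_append.mp h).2.2

end Incr

section Struct
variable {V : Type*} {G : SimpleGraph V} {lab : Sym2 V → ℝ} {A B : Set V} {a b : V}

lemma memB_of_adj (hcover : A ∪ B = Set.univ)
    (hsep : ∀ u w : V, u ∈ A \ B → w ∈ B \ A → ¬ G.Adj u w)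
    {u x : V} (hx : x ∈ B \ A) (h : G.Adj u x) : u ∈ B := by
  by_contra hu
  have huA : u ∈ A := (show u ∈ A ∪ B from hcover ▸ Set.mem_univ u).resolve_right hu
  exact hsep u x ⟨huA, hu⟩ hx h

lemma exit_split (hcover : A ∪ B = Set.univ)
    (hsep : ∀ u w : V, u ∈ A \ B → w ∈ B \ A → ¬ G.Adj u w) :
    ∀ {u y : V} (q : G.Walk u y), u ∈ B \ A → (∃ v ∈ q.support, v ∈ A) →
    ∃ (s : V) (_ : s ∈ A ∩ B) (q1 : G.Walk u s) (q2 : G.Walk s y),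
      q = q1.append q2 ∧ (∀ v ∈ q1.support, v ∈ B) := by
  intro u y q
  induction q with
  | nil =>
    rintro hu ⟨v, hv, hvA⟩
    simp only [Walk.support_nil, List.mem_singleton] at hv
    subst hv; exact absurd hvA hu.2
  | @cons u v y h q' ih =>
    rintro hu hex
    by_cases hvA : v ∈ A
    · have hvB : v ∈ B := memB_of_adj hcover hsep hu h.symm
      exact ⟨v, ⟨hvA, hvB⟩, Walk.cons h Walk.nil, q', rfl, by
        intro w hw
        simp only [Walk.support_cons, Walk.support_nil, List.mem_cons, List.mem_singleton] at hw
        rcases hw with rfl | hw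
        · exact hu.1
        · simp at hw; subst hw; exact hvB⟩
    · have hvB : v ∈ B := (show v ∈ A ∪ B from hcover ▸ Set.mem_univ v).resolve_left hvA
      obtain ⟨w, hw, hwA⟩ := hex
      have hw' : w ∈ q'.support := by
        simp only [Walk.support_cons, List.mem_cons] at hw
        rcases hw with rfl | hw
        · exact absurd hwA hu.2
        · exact hw
      obtain ⟨s, hs, q1, q2, heq, hq1B⟩ := ih ⟨hvB, hvA⟩ ⟨w, hw', hwA⟩
      refine ⟨s, hs, Walk.cons h q1, q2, ?_, ?_⟩
      · rw [Walk.cons_append, heq]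
      · intro t ht
        simp only [Walk.support_cons, List.mem_cons] at ht
        rcases ht with rfl | ht
        · exact hu.1
        · exact hq1B t ht

end Struct

section Struct2
variable {V : Type*} {G : SimpleGraph V} {lab : Sym2 V → ℝ} {A B : Set V} {a b : V}

lemma mem_pair (hinter : A ∩ B = {a, b}) {x : V} (hx : x ∈ A ∩ B) : x = a ∨ x = b := by
  rw [hinter] at hx; simpa using hx

lemma adj_pair (hadj : G.Adj a b) {x s : V} (hx : x = a ∨ x = b) (hs : s = a ∨ s = b)
    (hxs : x ≠ s) : G.Adj x s := by
  rcases hx with rfl | rfl <;> rcases hs with rfl | rfl <;>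
    first | exact absurd rfl hxs | exact hadj | exact hadj.symm

lemma no_return (hcover : A ∪ B = Set.univ)
    (hsep : ∀ u w : V, u ∈ A \ B → w ∈ B \ A → ¬ G.Adj u w)
    (hinter : A ∩ B = {a, b}) (hadj : G.Adj a b)
    (hB : IsGoodLabeling (G.induce B) (restrictLab lab B))
    {x v y : V} (h : G.Adj x v) {p' : G.Walk v y} (hp : (Walk.cons h p').IsPath)
    (hincr : IsIncreasing G lab (Walk.cons h p')) (hx : x ∈ A ∩ B) (hv : v ∈ B \ A)
    (hex : ∃ w ∈ p'.support, w ∈ A) : False := by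
  obtain ⟨s, hs, q1, q2, heq, hq1B⟩ := exit_split hcover hsep p' hv hex
  have hps : (Walk.cons h p') = (Walk.cons h q1).append q2 := by
    rw [Walk.cons_append, ← heq]
  have hwp : (Walk.cons h q1).IsPath := by
    rw [hps] at hp; exact hp.of_append_left
  have hwi : IsIncreasing G lab (Walk.cons h q1) := by
    rw [hps] at hincr; exact hincr.of_append_left
  have h2 : x ∉ p'.support := ((Walk.cons_isPath_iff h p').mp hp).2
  have h3 : s ∈ p'.support := by
    rw [heq]; exact (Walk.mem_support_append_iff q1 q2).mpr (Or.inl q1.end_mem_support)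
  have hsx : s ≠ x := fun hsx => h2 (hsx ▸ h3)
  have hadj_xs : G.Adj x s :=
    adj_pair hadj (mem_pair hinter hx) (mem_pair hinter hs) (Ne.symm hsx)
  have hlen : (Walk.cons h q1).length = 1 := by
    refine noCross hB hx.2 hs.2 hadj_xs hwp hwi ?_
    intro t ht
    simp only [Walk.support_cons, List.mem_cons] at ht
    rcases ht with rfl | ht
    · exact hx.2
    · exact hq1B t ht
  rw [Walk.length_cons] at hlen
  have h0 : q1.length = 0 := by omega
  exact hv.2 (Walk.eq_of_length_eq_zero h0 ▸ hs.1)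

lemma stay (hcover : A ∪ B = Set.univ)
    (hsep : ∀ u w : V, u ∈ A \ B → w ∈ B \ A → ¬ G.Adj u w)
    (hinter : A ∩ B = {a, b}) (hadj : G.Adj a b)
    (hB : IsGoodLabeling (G.induce B) (restrictLab lab B)) :
    ∀ {x y : V} (p : G.Walk x y), p.IsPath → IsIncreasing G lab p → x ∈ A → y ∈ A →
      ∀ v ∈ p.support, v ∈ A := by
  intro x y p
  induction p with
  | nil =>
    intro _ _ hx _ v hv
    simp only [Walk.support_nil, List.mem_singleton] at hv
    subst hv; exact hx
  | @cons x v y h p' ih =>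
    intro hp hincr hx hy w hw
    by_cases hvA : v ∈ A
    · have := ih hp.of_cons hincr.of_cons hvA hy
      simp only [Walk.support_cons, List.mem_cons] at hw
      rcases hw with rfl | hw
      · exact hx
      · exact this w hw
    · exfalso
      have hvB : v ∈ B := (show v ∈ A ∪ B from hcover ▸ Set.mem_univ v).resolve_left hvA
      have hxB : x ∈ B := memB_of_adj hcover hsep ⟨hvB, hvA⟩ h
      exact no_return hcover hsep hinter hadj hB h hp hincr ⟨hx, hxB⟩ ⟨hvB, hvA⟩
        ⟨y, p'.end_mem_support, hy⟩

lemma decomp (hcover : A ∪ B = Set.univ)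
    (hsep : ∀ u w : V, u ∈ A \ B → w ∈ B \ A → ¬ G.Adj u w)
    (hinter : A ∩ B = {a, b}) (hadj : G.Adj a b)
    (hB : IsGoodLabeling (G.induce B) (restrictLab lab B)) :
    ∀ {x y : V} (p : G.Walk x y), p.IsPath → IsIncreasing G lab p → x ∈ A → y ∈ B \ A →
    ∃ (s : V) (_ : s ∈ A ∩ B) (p1 : G.Walk x s) (p2 : G.Walk s y),
      p = p1.append p2 ∧ (∀ v ∈ p1.support, v ∈ A) ∧
        (∀ v ∈ p2.support, v ∈ B ∧ (v ∈ A → v = s)) := by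
  intro x y p
  induction p with
  | nil =>
    intro _ _ hx hy
    exact absurd hx hy.2
  | @cons x v y h p' ih =>
    intro hp hincr hx hy
    by_cases hvA : v ∈ A
    · obtain ⟨s, hs, p1, p2, heq, hA1, hB2⟩ := ih hp.of_cons hincr.of_cons hvA hy
      refine ⟨s, hs, Walk.cons h p1, p2, ?_, ?_, hB2⟩
      · rw [Walk.cons_append, ← heq]
      · intro t ht
        simp only [Walk.support_cons, List.mem_cons] at ht
        rcases ht with rfl | ht
        · exact hx
        · exact hA1 t ht
    · have hvB : v ∈ B := (show v ∈ A ∪ B from hcover ▸ Set.mem_univ v).resolve_left hvA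
      have hxB : x ∈ B := memB_of_adj hcover hsep ⟨hvB, hvA⟩ h
      have hnone : ∀ w ∈ p'.support, w ∉ A := by
        intro w hw hwA
        exact no_return hcover hsep hinter hadj hB h hp hincr ⟨hx, hxB⟩ ⟨hvB, hvA⟩ ⟨w, hw, hwA⟩
      refine ⟨x, ⟨hx, hxB⟩, Walk.nil, Walk.cons h p', rfl, ?_, ?_⟩
      · intro t ht
        simp only [Walk.support_nil, List.mem_singleton] at ht
        subst ht; exact hx
      · intro t ht
        simp only [Walk.support_cons, List.mem_cons] at ht
        rcases ht with rfl | ht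
        · exact ⟨hxB, fun _ => rfl⟩
        · exact ⟨(show t ∈ A ∪ B from hcover ▸ Set.mem_univ t).resolve_left (hnone t ht),
            fun hA => absurd hA (hnone t ht)⟩

end Struct2

section Cross
variable {V : Type*} {G : SimpleGraph V} {lab : Sym2 V → ℝ} {A B : Set V} {a b : V}

lemma isPath_concat' {x y z : V} {p : G.Walk x y} (hp : p.IsPath) (h : G.Adj y z)
    (hz : z ∉ p.support) : (p.append (Walk.cons h Walk.nil)).IsPath := by
  have h1 := Walk.isPath_def _ |>.mp hp
  rw [Walk.isPath_def, Walk.support_append]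
  simp only [Walk.support_cons, Walk.support_nil, List.tail_cons]
  rw [List.nodup_append]
  refine ⟨h1, List.nodup_singleton z, ?_⟩
  intro t ht
  simp only [List.mem_singleton]
  intro hteq hb htb; subst hb; subst htb; exact hz ht

lemma cross_step (hB : IsGoodLabeling (G.induce B) (restrictLab lab B))
    {s s' y v2 : V} (hs : s ∈ A ∩ B) (hs' : s' ∈ A ∩ B) (hss : s' ≠ s)
    (hadj' : G.Adj s' s) (h2 : G.Adj s v2) {p2' : G.Walk v2 y}
    (hp2 : (Walk.cons h2 p2').IsPath) (ip2 : IsIncreasing G lab (Walk.cons h2 p2'))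
    (hp2B : ∀ v ∈ (Walk.cons h2 p2').support, v ∈ B ∧ (v ∈ A → v = s))
    {q2 : G.Walk s' y} (hq2 : q2.IsPath) (iq2 : IsIncreasing G lab q2)
    (hq2B : ∀ v ∈ q2.support, v ∈ B ∧ (v ∈ A → v = s')) :
    lab s(s, v2) < lab s(s', s) := by
  by_contra hle
  push_neg at hle
  set r : G.Walk s' y := Walk.cons hadj' (Walk.cons h2 p2') with hr
  have hrpath : r.IsPath := by
    rw [Walk.cons_isPath_iff]
    refine ⟨hp2, fun hmem => ?_⟩
    exact hss ((hp2B s' hmem).2 hs'.1)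
  have hrincr : IsIncreasing G lab r := by
    unfold IsIncreasing at *
    rw [hr, Walk.edges_cons, List.map_cons]
    refine List.isChain_cons.mpr ⟨?_, ip2⟩
    intro u hu
    simp only [Walk.edges_cons, List.map_cons, List.head?_cons, Option.mem_some_iff] at hu
    subst hu; exact hle
  have hrB : ∀ v ∈ r.support, v ∈ B := by
    intro v hv
    rw [hr, Walk.support_cons] at hv
    rcases List.mem_cons.mp hv with rfl | hv
    · exact hs'.2
    · exact (hp2B v hv).1
  have heq : r = q2 :=
    unique_in hB hrpath hq2 hrincr iq2 hrB (fun v hv => (hq2B v hv).1)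
  have hsmem : s ∈ q2.support := by
    rw [← heq, hr, Walk.support_cons]
    exact List.mem_cons_of_mem _ (Walk.start_mem_support _)
  exact hss (((hq2B s hsmem).2 hs.1).symm)

end Cross

section CrossCase
variable {V : Type*} {G : SimpleGraph V} {lab : Sym2 V → ℝ} {A B : Set V} {a b : V}

lemma cross_case (hcover : A ∪ B = Set.univ)
    (hsep : ∀ u w : V, u ∈ A \ B → w ∈ B \ A → ¬ G.Adj u w)
    (hinter : A ∩ B = {a, b}) (hadj : G.Adj a b)
    (hA : IsGoodLabeling (G.induce A) (restrictLab lab A))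
    (hB : IsGoodLabeling (G.induce B) (restrictLab lab B))
    {x y : V} (hx : x ∈ A \ B) (hy : y ∈ B \ A) (p q : G.Walk x y)
    (hp : p.IsPath) (hq : q.IsPath) (ip : IsIncreasing G lab p)
    (iq : IsIncreasing G lab q) : p = q := by
  classical
  obtain ⟨sp, hsp, p1, p2, hpeq, hp1A, hp2B⟩ :=
    decomp hcover hsep hinter hadj hB p hp ip hx.1 hy
  obtain ⟨sq, hsq, q1, q2, hqeq, hq1A, hq2B⟩ :=
    decomp hcover hsep hinter hadj hB q hq iq hx.1 hy
  rw [hpeq] at hp ip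
  rw [hqeq] at hq iq
  have hp1path : p1.IsPath := hp.of_append_left
  have hp2path : p2.IsPath := hp.of_append_right
  have hq1path : q1.IsPath := hq.of_append_left
  have hq2path : q2.IsPath := hq.of_append_right
  have ip1 : IsIncreasing G lab p1 := ip.of_append_left
  have ip2 : IsIncreasing G lab p2 := ip.of_append_right
  have iq1 : IsIncreasing G lab q1 := iq.of_append_left
  have iq2 : IsIncreasing G lab q2 := iq.of_append_right
  by_cases hss : sp = sq
  · subst hss
    have e1 : p1 = q1 := unique_in hA hp1path hq1path ip1 iq1 hp1A hq1A
    have e2 : p2 = q2 := unique_in hB hp2path hq2path ip2 iq2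
      (fun v hv => (hp2B v hv).1) (fun v hv => (hq2B v hv).1)
    rw [hpeq, hqeq, e1, e2]
  · exfalso
    have adjqp : G.Adj sq sp :=
      adj_pair hadj (mem_pair hinter hsq) (mem_pair hinter hsp) (Ne.symm hss)
    cases p2 with
    | nil => exact hy.2 hsp.1
    | @cons _ v2 _ h2 p2' =>
    cases q2 with
    | nil => exact hy.2 hsq.1
    | @cons _ v2' _ h2' q2' =>
    have hbeta : lab s(sp, v2) < lab s(sq, sp) :=
      cross_step hB hsp hsq (Ne.symm hss) adjqp h2 hp2path ip2 hp2B hq2path iq2 hq2B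
    have hdelta : lab s(sq, v2') < lab s(sp, sq) :=
      cross_step hB hsq hsp hss adjqp.symm h2' hq2path iq2 hq2B hp2path ip2 hp2B
    have hswap : s(sq, sp) = s(sp, sq) := Sym2.eq_swap
    have hheadp : (((Walk.cons h2 p2').edges).map lab).head? = some (lab s(sp, v2)) := by
      simp [Walk.edges_cons]
    have hheadq : (((Walk.cons h2' q2').edges).map lab).head? = some (lab s(sq, v2')) := by
      simp [Walk.edges_cons]
    by_cases hmem : sq ∈ p1.support
    · have hsplit := Walk.take_spec p1 hmem
      have hu2path : (p1.dropUntil sq hmem).IsPath := hp1path.dropUntil hmem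
      have hu2incr : IsIncreasing G lab (p1.dropUntil sq hmem) := by
        have h' : IsIncreasing G lab
            ((p1.takeUntil sq hmem).append (p1.dropUntil sq hmem)) := by
          rw [hsplit]; exact ip1
        exact h'.of_append_right
      have hu2supp : ∀ v ∈ (p1.dropUntil sq hmem).support, v ∈ A :=
        fun v hv => hp1A v (Walk.support_dropUntil_subset p1 hmem hv)
      have hu2eq : p1.dropUntil sq hmem = Walk.cons adjqp Walk.nil := by
        refine unique_in hA hu2path (path_edge adjqp) hu2incr (incr_edge adjqp) hu2supp ?_
        intro v hv
        simp only [Walk.support_cons, Walk.support_nil, List.mem_cons,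
          List.mem_singleton] at hv
        rcases hv with rfl | hv
        · exact hsq.1
        · simp at hv; subst hv; exact hsp.1
      have hlast : ((p1.edges).map lab).getLast? = some (lab s(sq, sp)) := by
        conv_lhs => rw [← hsplit]
        rw [Walk.edges_append, hu2eq]
        simp
      have hle := ip.link _ (Option.mem_def.mpr hlast) _ (Option.mem_def.mpr hheadp)
      exact absurd hle (not_le.mpr hbeta)
    · have hwpath : (p1.append (Walk.cons adjqp.symm Walk.nil)).IsPath :=
        isPath_concat' hp1path adjqp.symm hmem
      have hwincr : IsIncreasing G lab (p1.append (Walk.cons adjqp.symm Walk.nil)) := by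
        unfold IsIncreasing
        rw [Walk.edges_append, List.map_append]
        refine List.isChain_append.mpr ⟨ip1, by simp, ?_⟩
        intro α hα β hβ'
        simp only [Walk.edges_cons, Walk.edges_nil, List.map_cons, List.map_nil,
          List.head?_cons, Option.mem_some_iff] at hβ'
        subst hβ'
        have h1 : α ≤ lab s(sp, v2) := ip.link _ hα _ (Option.mem_def.mpr hheadp)
        calc α ≤ lab s(sp, v2) := h1
          _ ≤ lab s(sp, sq) := by rw [← hswap]; exact le_of_lt hbeta
      have hwsupp : ∀ v ∈ (p1.append (Walk.cons adjqp.symm Walk.nil)).support, v ∈ A := by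
        intro v hv
        rcases (Walk.mem_support_append_iff _ _).mp hv with hv | hv
        · exact hp1A v hv
        · simp only [Walk.support_cons, Walk.support_nil, List.mem_cons,
            List.mem_singleton] at hv
          rcases hv with rfl | hv
          · exact hsp.1
          · simp at hv; subst hv; exact hsq.1
      have hweq : p1.append (Walk.cons adjqp.symm Walk.nil) = q1 :=
        unique_in hA hwpath hq1path hwincr iq1 hwsupp hq1A
      have hlastq : ((q1.edges).map lab).getLast? = some (lab s(sp, sq)) := by
        rw [← hweq, Walk.edges_append]
        simp
      have hle := iq.link _ (Option.mem_def.mpr hlastq) _ (Option.mem_def.mpr hheadq)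
      exact absurd hle (not_le.mpr hdelta)
end CrossCase

section Assemble
variable {V : Type*} {G : SimpleGraph V} {lab : Sym2 V → ℝ} {A B : Set V} {a b : V}

lemma glue_good (hcover : A ∪ B = Set.univ)
    (hsep : ∀ u w : V, u ∈ A \ B → w ∈ B \ A → ¬ G.Adj u w)
    (hinter : A ∩ B = {a, b}) (hadj : G.Adj a b)
    (hA : IsGoodLabeling (G.induce A) (restrictLab lab A))
    (hB : IsGoodLabeling (G.induce B) (restrictLab lab B)) :
    IsGoodLabeling G lab := by
  have hcover' : B ∪ A = Set.univ := by rw [Set.union_comm]; exact hcover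
  have hsep' : ∀ u w : V, u ∈ B \ A → w ∈ A \ B → ¬ G.Adj u w :=
    fun u w hu hw h => hsep w u hw hu h.symm
  have hinter' : B ∩ A = {a, b} := by rw [Set.inter_comm]; exact hinter
  intro x y p q hp hq ip iq
  by_cases hxy : x ∈ A ∧ y ∈ A
  · exact unique_in hA hp hq ip iq
      (stay hcover hsep hinter hadj hB p hp ip hxy.1 hxy.2)
      (stay hcover hsep hinter hadj hB q hq iq hxy.1 hxy.2)
  · by_cases hxy' : x ∈ B ∧ y ∈ B
    · exact unique_in hB hp hq ip iq
        (stay hcover' hsep' hinter' hadj hA p hp ip hxy'.1 hxy'.2)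
        (stay hcover' hsep' hinter' hadj hA q hq iq hxy'.1 hxy'.2)
    · by_cases hxA : x ∈ A
      · have hyA : y ∉ A := fun h => hxy ⟨hxA, h⟩
        have hyB : y ∈ B := (show y ∈ A ∪ B from hcover ▸ Set.mem_univ y).resolve_left hyA
        have hxB : x ∉ B := fun h => hxy' ⟨h, hyB⟩
        exact cross_case hcover hsep hinter hadj hA hB ⟨hxA, hxB⟩ ⟨hyB, hyA⟩ p q hp hq ip iq
      · have hxB : x ∈ B := (show x ∈ A ∪ B from hcover ▸ Set.mem_univ x).resolve_left hxA
        have hyB : y ∉ B := fun h => hxy' ⟨hxB, h⟩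
        have hyA : y ∈ A := (show y ∈ A ∪ B from hcover ▸ Set.mem_univ y).resolve_right hyB
        exact cross_case hcover' hsep' hinter' hadj hB hA ⟨hxB, hxA⟩ ⟨hyA, hyB⟩ p q hp hq ip iq

lemma good_congr {lab' : Sym2 V → ℝ} (h : ∀ e ∈ G.edgeSet, lab e = lab' e)
    (hg : IsGoodLabeling G lab) : IsGoodLabeling G lab' := by
  have key : ∀ {x y : V} (p : G.Walk x y), p.edges.map lab' = p.edges.map lab :=
    fun p => List.map_congr_left fun e he => (h e (p.edges_subset_edgeSet he)).symm
  intro x y p q hp hq ip iq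
  refine hg x y p q hp hq ?_ ?_
  · unfold IsIncreasing at ip ⊢; rwa [← key p]
  · unfold IsIncreasing at iq ⊢; rwa [← key q]

lemma good_shift (C : ℝ) (hg : IsGoodLabeling G lab) :
    IsGoodLabeling G (fun e => lab e + C) := by
  have key : ∀ {x y : V} (p : G.Walk x y),
      IsIncreasing G (fun e => lab e + C) p → IsIncreasing G lab p := by
    intro x y p hp
    unfold IsIncreasing at *
    have heq : (p.edges.map fun e => lab e + C) = (p.edges.map lab).map (· + C) := by
      rw [List.map_map]; rfl
    rw [heq] at hp
    replace hp := (List.isChain_map _).mp hp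
    exact hp.imp fun a b h => by simpa using h
  intro x y p q hp hq ip iq
  exact hg x y p q hp hq (key p ip) (key q iq)

end Assemble

open Classical in
noncomputable def extLab {V : Type*} (S : Set V) (μ : Sym2 ↥S → ℝ) (d : ↥S) :
    Sym2 V → ℝ :=
  fun e => μ (Sym2.map (fun v => if h : v ∈ S then (⟨v, h⟩ : ↥S) else d) e)

open Classical in
lemma ext_fun_coe {V : Type*} {S : Set V} (d : ↥S) (w : ↥S) :
    (fun t => if h : t ∈ S then (⟨t, h⟩ : ↥S) else d) w.val = w := by
  simp only []
  split
  · rfl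
  · exact absurd w.2 ‹_›

lemma extLab_coe {V : Type*} {S : Set V} (μ : Sym2 ↥S → ℝ) (d : ↥S) (u v : ↥S) :
    extLab S μ d s(u.val, v.val) = μ s(u, v) := by
  simp only [extLab, Sym2.map_pair_eq, ext_fun_coe]

lemma extLab_restrict {V : Type*} (S : Set V) (μ : Sym2 ↥S → ℝ) (d : ↥S) :
    restrictLab (extLab S μ d) S = μ := by
  funext e
  induction e using Sym2.inductionOn with
  | hf u v =>
    show extLab S μ d (Sym2.map Subtype.val s(u, v)) = μ s(u, v)
    rw [Sym2.map_pair_eq]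
    exact extLab_coe μ d u v

open Classical in
noncomputable def glueLab {V : Type*} (A B : Set V) (μA : Sym2 ↥A → ℝ)
    (μB : Sym2 ↥B → ℝ) (dA : ↥A) (dB : ↥B) : Sym2 V → ℝ :=
  fun e => if (∃ u v : V, e = s(u, v) ∧ u ∈ A ∧ v ∈ A) then extLab A μA dA e
    else extLab B μB dB e

lemma glueLab_restrictA {V : Type*} (A B : Set V) (μA : Sym2 ↥A → ℝ)
    (μB : Sym2 ↥B → ℝ) (dA : ↥A) (dB : ↥B) :
    restrictLab (glueLab A B μA μB dA dB) A = μA := by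
  funext e
  induction e using Sym2.inductionOn with
  | hf u v =>
    show glueLab A B μA μB dA dB (Sym2.map Subtype.val s(u, v)) = μA s(u, v)
    rw [Sym2.map_pair_eq]
    rw [glueLab, if_pos ⟨u.val, v.val, rfl, u.2, v.2⟩]
    exact extLab_coe μA dA u v


/-- Let `(A, B)` be a separation of `G` of order two whose two common vertices are adjacent,
and let `lab` be a `c`-edge-labeling of `G`. If the restrictions of `lab` to `G[A]` and to
`G[B]` are `c`-gels of `G[A]` and `G[B]` respectively, then `lab` is a `c`-gel of `G`.
Moreover, if both `G[A]` and `G[B]` are good, then `G` is good. -/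
theorem cgel_glue_along_separation {V : Type*} [Fintype V] (G : SimpleGraph V) (c : ℕ)
    (lab : Sym2 V → ℝ) (hlab : (lab '' G.edgeSet).ncard ≤ c)
    (A B : Set V) (hcover : A ∪ B = Set.univ)
    (hsep : ∀ u w : V, u ∈ A \ B → w ∈ B \ A → ¬ G.Adj u w)
    (a b : V) (hab : a ≠ b) (hinter : A ∩ B = {a, b}) (hadj : G.Adj a b) :
    (IsCGel (G.induce A) c (restrictLab lab A) →
      IsCGel (G.induce B) c (restrictLab lab B) → IsCGel G c lab) ∧
    ((∃ μ, IsGoodLabeling (G.induce A) μ) → (∃ μ, IsGoodLabeling (G.induce B) μ) →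
      ∃ μ, IsGoodLabeling G μ) := by
  constructor
  · rintro ⟨hAg, -⟩ ⟨hBg, -⟩
    exact ⟨glue_good hcover hsep hinter hadj hAg hBg, hlab⟩
  · rintro ⟨μA, hμA⟩ ⟨μB, hμB⟩
    classical
    have haAB : a ∈ A ∩ B := by rw [hinter]; exact Set.mem_insert _ _
    have hbAB : b ∈ A ∩ B := by rw [hinter]; exact Set.mem_insert_of_mem _ rfl
    set aA : ↥A := ⟨a, haAB.1⟩ with haA'
    set bA : ↥A := ⟨b, hbAB.1⟩ with hbA'
    set aB : ↥B := ⟨a, haAB.2⟩ with haB'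
    set bB : ↥B := ⟨b, hbAB.2⟩ with hbB'
    set C : ℝ := μA s(aA, bA) - μB s(aB, bB) with hC
    set ν : Sym2 ↥B → ℝ := fun e => μB e + C with hν
    have hνg : IsGoodLabeling (G.induce B) ν := good_shift C hμB
    set lab' := glueLab A B μA ν aA aB with hlab'
    refine ⟨lab', glue_good hcover hsep hinter hadj ?_ ?_⟩
    · rw [hlab', glueLab_restrictA]; exact hμA
    · refine good_congr ?_ hνg
      intro e he
      revert he
      induction e using Sym2.inductionOn with
      | hf u v =>
        intro he
        have hGadj : G.Adj u.val v.val := (SimpleGraph.mem_edgeSet _).mp he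
        have hne : u.val ≠ v.val := hGadj.ne
        show ν s(u, v) = restrictLab lab' B s(u, v)
        have hres : restrictLab lab' B s(u, v) = lab' s(u.val, v.val) := by
          show lab' (Sym2.map Subtype.val s(u, v)) = _
          rw [Sym2.map_pair_eq]
        rw [hres]
        by_cases hc : ∃ u' v' : V, (s(u.val, v.val) : Sym2 V) = s(u', v') ∧ u' ∈ A ∧ v' ∈ A
        · have hmem : u.val ∈ A ∧ v.val ∈ A := by
            obtain ⟨u', v', heq, hu', hv'⟩ := hc
            rw [Sym2.eq_iff] at heq
            rcases heq with ⟨h1, h2⟩ | ⟨h1, h2⟩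
            · exact ⟨h1 ▸ hu', h2 ▸ hv'⟩
            · exact ⟨h1 ▸ hv', h2 ▸ hu'⟩
          have hu2 := mem_pair hinter ⟨hmem.1, u.2⟩
          have hv2 := mem_pair hinter ⟨hmem.2, v.2⟩
          have hlab'eq : lab' s(u.val, v.val) = μA s(aA, bA) := by
            rw [hlab']
            unfold glueLab
            rw [if_pos hc]
            rcases hu2 with h | h <;> rcases hv2 with h' | h'
            · exact absurd (h.trans h'.symm) hne
            · rw [h, h', haA', hbA']
              exact extLab_coe μA aA aA bA
            · rw [h, h', haA', hbA']
              rw [show (s(b, a) : Sym2 V) = s(a, b) from Sym2.eq_swap]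
              exact extLab_coe μA aA aA bA
            · exact absurd (h.trans h'.symm) hne
          have hνeq : ν s(u, v) = μA s(aA, bA) := by
            have hu3 : u = aB ∨ u = bB := by
              rcases hu2 with h | h
              · exact Or.inl (Subtype.ext (by rw [h, haB']))
              · exact Or.inr (Subtype.ext (by rw [h, hbB']))
            have hv3 : v = aB ∨ v = bB := by
              rcases hv2 with h | h
              · exact Or.inl (Subtype.ext (by rw [h, haB']))
              · exact Or.inr (Subtype.ext (by rw [h, hbB']))
            have habne : u ≠ v := fun h => hne (congrArg Subtype.val h)
            rcases hu3 with rfl | rfl <;> rcases hv3 with rfl | rfl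
            · exact absurd rfl habne
            · show μB s(aB, bB) + C = μA s(aA, bA)
              rw [hC]; ring
            · rw [show (s(bB, aB) : Sym2 ↥B) = s(aB, bB) from Sym2.eq_swap]
              show μB s(aB, bB) + C = μA s(aA, bA)
              rw [hC]; ring
            · exact absurd rfl habne
          rw [hνeq, hlab'eq]
        · rw [hlab']
          unfold glueLab
          rw [if_neg hc, extLab_coe]
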